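/- Let q ≥ 5 be a prime power, m | q-1, u, t positive integers, v ≥ 0 with v ≤ u and u + v ≤ m - 1. Let ζ₁,…,ζ_t ∈ F_q be primitive m-th roots of unity and let D(u,v,t,m) be the code of length tm over F_q with parity-check matrix consisting of block-diagonal blocks A_i with rows (1, ζ_i^j, …, ζ_i^{j(m-1)}) for j = 1,…,u, plus v global rows built from exponents u+1,…,u+v in each block. Then D(u,v,t,m) is an (m-u, u+1)-LRC attaining the Singleton-type bound d = n - k + 1 - (⌈k/r⌉ - 1)(δ-1) with parameters [tm, tm - tu - v, u+v+1]_q, r = m - u, δ = u + 1. -/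

import Mathlib

/-- Minimum Hamming weight (minimum distance) of a set of vectors. -/
noncomputable def minWt {ι F : Type*} [Fintype ι] [Zero F] [DecidableEq F]
    (C : Set (ι → F)) : ℕ :=
  sInf {w | ∃ x ∈ C, x ≠ 0 ∧ (Finset.univ.filter fun a => x a ≠ 0).card = w}

/-- (r,δ)-locality: every coordinate i lies in a repair set S of size at most
r + δ - 1 such that the code punctured to S has minimum distance at least δ. -/
def IsLRC {ι F : Type*} [Fintype ι] [DecidableEq ι] [Zero F] [DecidableEq F]
    (C : Set (ι → F)) (r δ : ℕ) : Prop :=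
  ∀ i : ι, ∃ S : Finset ι, i ∈ S ∧ S.card ≤ r + δ - 1 ∧
    ∀ x ∈ C, (∃ j ∈ S, x j ≠ 0) → δ ≤ (S.filter fun j => x j ≠ 0).card

/-- The parity-check matrix of the code D(u,v,t,m) over F_q, built from
primitive m-th roots of unity ζ_i. -/
def parityD (m u v t : ℕ) {F : Type*} [Field F] (ζ : Fin t → F) :
    Matrix ((Fin t × Fin u) ⊕ Fin v) (Fin t × Fin m) F :=
  fun r c =>
    match r with
    | Sum.inl (i, j) => if c.1 = i then ζ i ^ ((j.val + 1) * c.2.val) else 0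
    | Sum.inr j => ζ c.1 ^ ((u + j.val + 1) * c.2.val)

open Finset

/-- powers of an element of order `m` are injective below `m`. -/
lemma pow_inj_of_orderOf {F : Type*} [Field F] {ζ : F} {m : ℕ} (hm : 0 < m)
    (hζ : orderOf ζ = m) {a b : ℕ} (ha : a < m) (hb : b < m) (h : ζ ^ a = ζ ^ b) : a = b := by
  have hζm : ζ ^ m = 1 := by rw [← hζ]; exact pow_orderOf_eq_one ζ
  have hζ0 : ζ ≠ 0 := by
    rintro rfl
    rw [zero_pow hm.ne'] at hζm
    exact one_ne_zero hζm.symm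
  have key : ∀ a b : ℕ, a ≤ b → b < m → ζ ^ a = ζ ^ b → a = b := by
    intro a b hab hb h
    have h1 : ζ ^ a * ζ ^ (b - a) = ζ ^ a * 1 := by
      rw [← pow_add, mul_one, Nat.add_sub_cancel' hab]
      exact h.symm
    have h2 : ζ ^ (b - a) = 1 := by
      have := mul_left_cancel₀ (pow_ne_zero a hζ0) h1
      exact this
    have h3 : m ∣ b - a := hζ ▸ orderOf_dvd_of_pow_eq_one h2
    have h4 : b - a = 0 := by
      rcases Nat.eq_zero_or_pos (b - a) with h' | h'
      · exact h'
      · exact absurd (Nat.le_of_dvd h' h3) (by omega)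
    omega
  rcases le_total a b with hab | hab
  · exact key a b hab hb h
  · exact (key b a hab ha h.symm).symm

/-- If a vector has support of size at most `s` and is orthogonal to the first `s`
Vandermonde rows at injective points, it is zero. -/
lemma zero_of_low_support {F : Type*} [Field F] [DecidableEq F] {m s : ℕ}
    (x y : Fin m → F) (hx : Function.Injective x)
    (hcard : (univ.filter fun c => y c ≠ 0).card ≤ s)
    (hsum : ∀ j : ℕ, j < s → ∑ c, y c * x c ^ j = 0) : y = 0 := by
  classical
  set T := univ.filter fun c => y c ≠ 0 with hT
  have key : ∀ c ∈ T, y c = 0 := by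
    let e : Fin T.card ≃ {c // c ∈ T} := T.equivFin.symm
    have hzero : (fun i : Fin T.card => y (e i)) = 0 := by
      apply Matrix.eq_zero_of_forall_pow_sum_mul_pow_eq_zero (f := fun i => x (e i))
      · intro i j hij
        exact e.injective (Subtype.coe_injective (hx hij))
      · intro j
        have hj : (j : ℕ) < s := lt_of_lt_of_le j.isLt hcard
        have h0 := hsum j hj
        rw [← h0]
        have h1 : ∑ i : Fin T.card, y (e i) * x (e i) ^ (j : ℕ)
            = ∑ c : {c // c ∈ T}, y c * x c ^ (j : ℕ) :=
          Equiv.sum_comp e (fun c : {c // c ∈ T} => y c * x c ^ (j : ℕ))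
        rw [h1, Finset.sum_coe_sort T (fun c => y c * x c ^ (j : ℕ))]
        apply Finset.sum_subset (Finset.subset_univ T)
        intro c _ hcT
        have : y c = 0 := by
          by_contra hyc
          exact hcT (by simp [hT, hyc])
        simp [this]
    intro c hc
    have := congrFun hzero (e.symm ⟨c, hc⟩)
    simpa using this
  funext c
  by_cases hc : y c = 0
  · exact hc
  · exact key c (by simp [hT, hc])

/-- A vector on one block orthogonal to rows `ζ^{(j+1)c}`, `j < s`, with support ≤ s is zero. -/
lemma block_zero {F : Type*} [Field F] [DecidableEq F] {m s : ℕ} (hm : 0 < m) {ζ : F}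
    (hζ : orderOf ζ = m) (y : Fin m → F)
    (hsum : ∀ j : ℕ, j < s → ∑ c : Fin m, ζ ^ ((j + 1) * c.val) * y c = 0)
    (hcard : (univ.filter fun c => y c ≠ 0).card ≤ s) : y = 0 := by
  have hζ0 : ζ ≠ 0 := by
    rintro rfl
    have := hζ ▸ pow_orderOf_eq_one (0 : F)
    rw [zero_pow hm.ne'] at this
    · exact one_ne_zero this.symm
  have hX : Function.Injective (fun c : Fin m => ζ ^ c.val) := by
    intro a b hab
    exact Fin.ext (pow_inj_of_orderOf hm hζ a.isLt b.isLt hab)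
  have hY : (fun c : Fin m => y c * ζ ^ c.val) = 0 := by
    apply zero_of_low_support _ _ hX
    · convert hcard using 2
      ext c
      simp [mul_ne_zero_iff, pow_ne_zero _ hζ0]
    · intro j hj
      have h0 := hsum j hj
      rw [← h0]
      apply Finset.sum_congr rfl
      intro c _
      have he : (j + 1) * c.val = c.val + c.val * j := by ring
      rw [he, pow_add, pow_mul]
      ring
  funext c
  have := congrFun hY c
  simp only [Pi.zero_apply, mul_eq_zero] at this
  rcases this with h | h
  · exact h
  · exact absurd h (pow_ne_zero _ hζ0)

/-- Cardinality of a filter over a product splits as a sum. -/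
lemma card_filter_prod {α β : Type*} [Fintype α] [Fintype β] (p : α × β → Prop)
    [DecidablePred p] :
    (univ.filter p).card = ∑ a : α, (univ.filter fun b => p (a, b)).card := by
  rw [Finset.card_filter, Fintype.sum_prod_type]
  exact Finset.sum_congr rfl fun a _ => (Finset.card_filter _ _).symm

section D
variable {F : Type*} [Field F] [DecidableEq F] {m u v t : ℕ} {ζ : Fin t → F}

lemma ker_local {x : Fin t × Fin m → F} (hx : (parityD m u v t ζ).mulVec x = 0)
    (i : Fin t) (j : Fin u) :
    ∑ c2 : Fin m, ζ i ^ ((j.val + 1) * c2.val) * x (i, c2) = 0 := by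
  have h := congrFun hx (Sum.inl (i, j))
  simp only [Matrix.mulVec, dotProduct, parityD, Pi.zero_apply] at h
  rw [Fintype.sum_prod_type] at h
  simp only [ite_mul, zero_mul, Finset.sum_ite_irrel, Finset.sum_const_zero,
    Finset.sum_ite_eq', Finset.mem_univ, if_true] at h
  exact h

lemma ker_global {x : Fin t × Fin m → F} (hx : (parityD m u v t ζ).mulVec x = 0)
    (j : Fin v) :
    ∑ c1 : Fin t, ∑ c2 : Fin m, ζ c1 ^ ((u + j.val + 1) * c2.val) * x (c1, c2) = 0 := by
  have h := congrFun hx (Sum.inr j)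
  simp only [Matrix.mulVec, dotProduct, parityD, Pi.zero_apply] at h
  rw [Fintype.sum_prod_type] at h
  exact h

end D

section D2
set_option linter.unusedSectionVars false
variable {F : Type*} [Field F] [DecidableEq F] {m u v t : ℕ} {ζ : Fin t → F}

/-- any nonzero block of a codeword has weight at least u+1 -/
lemma block_weight (hm : 0 < m) (hum : u < m) (hζ : ∀ i, orderOf (ζ i) = m)
    {x : Fin t × Fin m → F} (hx : (parityD m u v t ζ).mulVec x = 0) (i : Fin t)
    (hne : ∃ c2, x (i, c2) ≠ 0) :
    u + 1 ≤ (univ.filter fun c2 => x (i, c2) ≠ 0).card := by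
  by_contra hcon
  push_neg at hcon
  have hz : (fun c2 => x (i, c2)) = 0 := by
    apply block_zero hm (hζ i)
    · intro j hj
      exact ker_local hx i ⟨j, hj⟩
    · omega
  obtain ⟨c2, hc2⟩ := hne
  exact hc2 (congrFun hz c2)

/-- distance lower bound: every nonzero codeword has weight at least u+v+1 -/
lemma dist_lb (hm : 0 < m) (huv1 : u + v + 1 ≤ m) (hvu : v ≤ u) (hu : 1 ≤ u)
    (hζ : ∀ i, orderOf (ζ i) = m)
    {x : Fin t × Fin m → F} (hx : (parityD m u v t ζ).mulVec x = 0) (hx0 : x ≠ 0) :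
    u + v + 1 ≤ (univ.filter fun a => x a ≠ 0).card := by
  classical
  by_contra hcon
  push_neg at hcon
  have hW : (univ.filter fun a => x a ≠ 0).card
      = ∑ i : Fin t, (univ.filter fun c2 => x (i, c2) ≠ 0).card :=
    card_filter_prod _
  -- blocks with nonzero entries
  set B := univ.filter (fun i : Fin t => ∃ c2, x (i, c2) ≠ 0) with hB
  have hBne : B.Nonempty := by
    by_contra hBe
    apply hx0
    funext a
    rw [Finset.not_nonempty_iff_eq_empty] at hBe
    by_contra ha
    have : a.1 ∈ B := by
      simp only [hB, Finset.mem_filter, Finset.mem_univ, true_and]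
      exact ⟨a.2, ha⟩
    rw [hBe] at this
    exact absurd this (Finset.notMem_empty _)
  have hwt : ∀ i ∈ B, u + 1 ≤ (univ.filter fun c2 => x (i, c2) ≠ 0).card := by
    intro i hi
    simp only [hB, Finset.mem_filter, Finset.mem_univ, true_and] at hi
    exact block_weight hm (by omega) hζ hx i hi
  have hsum_ge : ∀ S : Finset (Fin t), S ⊆ B →
      S.card * (u + 1) ≤ (univ.filter fun a => x a ≠ 0).card := by
    intro S hS
    rw [hW]
    calc S.card * (u + 1) = ∑ _i ∈ S, (u + 1) := by rw [Finset.sum_const, smul_eq_mul]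
    _ ≤ ∑ i ∈ S, (univ.filter fun c2 => x (i, c2) ≠ 0).card :=
        Finset.sum_le_sum (fun i hi => hwt i (hS hi))
    _ ≤ ∑ i : Fin t, (univ.filter fun c2 => x (i, c2) ≠ 0).card :=
        Finset.sum_le_sum_of_subset (Finset.subset_univ S)
  have hB1 : B.card = 1 := by
    have hpos : 1 ≤ B.card := Finset.card_pos.mpr hBne
    by_contra hc
    have h2 : 1 < B.card := by omega
    obtain ⟨a, ha, b, hb, hab⟩ := Finset.one_lt_card.mp h2
    have hS : ({a, b} : Finset (Fin t)) ⊆ B := by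
      intro z hz
      simp only [Finset.mem_insert, Finset.mem_singleton] at hz
      rcases hz with rfl | rfl <;> assumption
    have h3 := hsum_ge {a, b} hS
    rw [Finset.card_pair hab] at h3
    omega
  obtain ⟨i0, hi0⟩ := Finset.card_eq_one.mp hB1
  have hblk : ∀ i : Fin t, i ≠ i0 → ∀ c2, x (i, c2) = 0 := by
    intro i hi c2
    by_contra hxc
    have : i ∈ B := by
      simp only [hB, Finset.mem_filter, Finset.mem_univ, true_and]
      exact ⟨c2, hxc⟩
    rw [hi0, Finset.mem_singleton] at this
    exact hi this
  have hWi0 : (univ.filter fun a => x a ≠ 0).card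
      = (univ.filter fun c2 => x (i0, c2) ≠ 0).card := by
    rw [hW, Finset.sum_eq_single i0]
    · intro i _ hi
      rw [Finset.card_eq_zero, Finset.filter_eq_empty_iff]
      intro c2 _
      simp [hblk i hi c2]
    · intro h
      exact absurd (Finset.mem_univ i0) h
  have hz : (fun c2 => x (i0, c2)) = 0 := by
    apply block_zero (s := u + v) hm (hζ i0)
    · intro j hj
      by_cases hju : j < u
      · exact ker_local hx i0 ⟨j, hju⟩
      · push_neg at hju
        have hjv : j - u < v := by omega
        have hg := ker_global hx ⟨j - u, hjv⟩
        rw [Finset.sum_eq_single i0] at hg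
        · have he : u + (j - u) + 1 = j + 1 := by omega
          simpa only [he] using hg
        · intro i _ hi
          apply Finset.sum_eq_zero
          intro c2 _
          rw [hblk i hi c2, mul_zero]
        · intro h
          exact absurd (Finset.mem_univ i0) h
    · omega
  apply hx0
  funext a
  by_cases hi : a.1 = i0
  · have := congrFun hz a.2
    simp only [Pi.zero_apply] at this
    calc x a = x (a.1, a.2) := by rfl
    _ = 0 := by rw [hi]; exact this
  · exact hblk a.1 hi a.2
end D2

section D3
set_option linter.unusedSectionVars false
variable {F : Type*} [Field F] [DecidableEq F] {m u v t : ℕ} {ζ : Fin t → F}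

lemma rows_indep (hm : 0 < m) (huv1 : u + v + 1 ≤ m) (ht : 1 ≤ t)
    (hζ : ∀ i, orderOf (ζ i) = m) :
    LinearIndependent F (parityD m u v t ζ) := by
  refine Fintype.linearIndependent_iff.mpr ?_
  intro g hg
  have key : ∀ i : Fin t,
      (fun k : Fin (u + v) => if h : k.val < u then g (Sum.inl (i, ⟨k.val, h⟩))
        else g (Sum.inr ⟨k.val - u, by omega⟩)) = 0 := by
    intro i
    apply Matrix.eq_zero_of_forall_pow_sum_mul_pow_eq_zero
      (f := fun k : Fin (u + v) => ζ i ^ (k.val + 1))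
    · intro a b hab
      have h1 : a.val + 1 < m := by omega
      have h2 : b.val + 1 < m := by omega
      have := pow_inj_of_orderOf hm (hζ i) h1 h2 hab
      exact Fin.ext (by omega)
    · intro idx
      have hc2 : idx.val < m := by omega
      have h0 := congrFun hg (i, (⟨idx.val, hc2⟩ : Fin m))
      simp only [Finset.sum_apply, Pi.smul_apply, Pi.zero_apply, smul_eq_mul] at h0
      rw [Fintype.sum_sum_type, Fintype.sum_prod_type] at h0
      simp only [parityD, mul_ite, mul_zero, Finset.sum_ite_irrel, Finset.sum_const_zero,
        Finset.sum_ite_eq, Finset.mem_univ, if_true] at h0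
      rw [Fin.sum_univ_add]
      have hA : ∀ j : Fin u,
          (if h : (Fin.castAdd v j).val < u then g (Sum.inl (i, ⟨(Fin.castAdd v j).val, h⟩))
            else g (Sum.inr ⟨(Fin.castAdd v j).val - u, by omega⟩))
            * (ζ i ^ ((Fin.castAdd v j).val + 1)) ^ (idx.val)
          = g (Sum.inl (i, j)) * ζ i ^ ((j.val + 1) * idx.val) := by
        intro j
        rw [dif_pos (show (Fin.castAdd v j).val < u from j.isLt), ← pow_mul]
        rfl
      have hB : ∀ j : Fin v,
          (if h : (Fin.natAdd u j).val < u then g (Sum.inl (i, ⟨(Fin.natAdd u j).val, h⟩))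
            else g (Sum.inr ⟨(Fin.natAdd u j).val - u, by omega⟩))
            * (ζ i ^ ((Fin.natAdd u j).val + 1)) ^ (idx.val)
          = g (Sum.inr j) * ζ i ^ ((u + j.val + 1) * idx.val) := by
        intro j
        rw [dif_neg (show ¬((Fin.natAdd u j).val < u) by simp)]
        have h2 : (⟨(Fin.natAdd u j).val - u, show u + j.val - u < v by
            have := j.isLt; omega⟩ : Fin v) = j :=
          Fin.ext (show u + j.val - u = j.val by omega)
        rw [h2, ← pow_mul]
        rfl
      rw [Finset.sum_congr rfl (fun j _ => hA j), Finset.sum_congr rfl (fun j _ => hB j)]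
      exact h0
  intro r
  rcases r with ⟨i, j⟩ | j
  · have hk := congrFun (key i) ⟨j.val, show j.val < u + v by have := j.isLt; omega⟩
    rw [dif_pos j.isLt] at hk
    simpa using hk
  · have hk := congrFun (key ⟨0, ht⟩) ⟨u + j.val, show u + j.val < u + v by
      have := j.isLt; omega⟩
    rw [dif_neg (show ¬(u + j.val < u) by omega)] at hk
    have h3 : (⟨u + j.val - u, show u + j.val - u < v by have := j.isLt; omega⟩ : Fin v) = j :=
      Fin.ext (show u + j.val - u = j.val by omega)
    rw [h3] at hk
    simpa using hk

end D3

section D4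
set_option linter.unusedSectionVars false
variable {F : Type*} [Field F] [DecidableEq F] {m u v t : ℕ} {ζ : Fin t → F}

lemma exists_min_codeword (hm : 0 < m) (huv1 : u + v + 1 ≤ m) (ht : 1 ≤ t) (hu : 1 ≤ u)
    (hζ : ∀ i, orderOf (ζ i) = m) :
    ∃ x : Fin t × Fin m → F, (parityD m u v t ζ).mulVec x = 0 ∧ x ≠ 0 ∧
      (univ.filter fun a => x a ≠ 0).card = u + v + 1 := by
  classical
  set i0 : Fin t := ⟨0, ht⟩ with hi0def
  set z : F := ζ i0 with hzdef
  have hz : orderOf z = m := hζ i0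
  have hz1 : z ^ m = 1 := by rw [← hz]; exact pow_orderOf_eq_one z
  set K : ℕ := m - (u + v) - 1 with hKdef
  have hKm : K < m := by omega
  set f : Polynomial F := ∏ c ∈ Finset.range K, (Polynomial.X - Polynomial.C (z ^ c))
    with hfdef
  have hdeg : f.natDegree = K := by
    rw [hfdef, Polynomial.natDegree_prod]
    · rw [Finset.sum_congr rfl (fun c _ => Polynomial.natDegree_X_sub_C (z ^ c)),
        Finset.sum_const, smul_eq_mul, mul_one, Finset.card_range]
    · intro c _
      exact Polynomial.X_sub_C_ne_zero _
  have hpow_ne_one : ∀ k : ℕ, 0 < k → k < m → z ^ k ≠ 1 := by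
    intro k hk hkm h1
    have hdvd : m ∣ k := by rw [← hz]; exact orderOf_dvd_of_pow_eq_one h1
    exact absurd (Nat.le_of_dvd hk hdvd) (by omega)
  have hchar : ∀ k : ℕ, 0 < k → k < m → ∑ c : Fin m, (z ^ k) ^ (c : ℕ) = 0 := by
    intro k hk hkm
    rw [Fin.sum_univ_eq_sum_range (fun c => (z ^ k) ^ c) m,
      geom_sum_eq (hpow_ne_one k hk hkm)]
    have hone : (z ^ k) ^ m = 1 := by rw [← pow_mul, mul_comm, pow_mul, hz1, one_pow]
    rw [hone, sub_self, zero_div]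
  set y : Fin m → F := fun c => f.eval (z ^ (c : ℕ)) with hydef
  have hpar : ∀ j : ℕ, 1 ≤ j → j ≤ u + v → ∑ c : Fin m, z ^ (j * (c : ℕ)) * y c = 0 := by
    intro j hj1 hj2
    have hdeg' : f.natDegree < m - (u + v) := by omega
    have hterm : ∀ c : Fin m, z ^ (j * (c : ℕ)) * y c
        = ∑ d ∈ Finset.range (m - (u + v)), f.coeff d * z ^ ((j + d) * (c : ℕ)) := by
      intro c
      rw [hydef]
      simp only
      rw [Polynomial.eval_eq_sum_range' hdeg' (z ^ (c : ℕ)), Finset.mul_sum]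
      apply Finset.sum_congr rfl
      intro d _
      rw [← pow_mul]
      have he : j * (c : ℕ) + (c : ℕ) * d = (j + d) * (c : ℕ) := by ring
      rw [mul_left_comm, ← pow_add, he]
    rw [Finset.sum_congr rfl (fun c _ => hterm c), Finset.sum_comm]
    apply Finset.sum_eq_zero
    intro d hd
    rw [Finset.mem_range] at hd
    rw [← Finset.mul_sum]
    have h0 : ∑ c : Fin m, z ^ ((j + d) * (c : ℕ)) = 0 := by
      have hc := hchar (j + d) (by omega) (by omega)
      rw [← hc]
      apply Finset.sum_congr rfl
      intro c _
      rw [← pow_mul]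
    rw [h0, mul_zero]
  have hy0 : ∀ c : Fin m, y c = 0 ↔ (c : ℕ) < K := by
    intro c
    rw [hydef]
    simp only
    rw [hfdef, Polynomial.eval_prod]
    rw [Finset.prod_eq_zero_iff]
    constructor
    · rintro ⟨c', hc', hzero⟩
      rw [Finset.mem_range] at hc'
      rw [Polynomial.eval_sub, Polynomial.eval_X, Polynomial.eval_C, sub_eq_zero] at hzero
      have := pow_inj_of_orderOf hm hz c.isLt (by omega) hzero
      omega
    · intro hc
      exact ⟨(c : ℕ), Finset.mem_range.mpr hc, by simp⟩
  have hycard : (univ.filter fun c : Fin m => y c ≠ 0).card = u + v + 1 := by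
    have h1 : (univ.filter fun c : Fin m => y c ≠ 0)
        = (univ.filter fun c : Fin m => ¬ ((c : ℕ) < K)) := by
      apply Finset.filter_congr
      intro c _
      simp only [ne_eq, hy0 c]
    have h2 : (univ.filter fun c : Fin m => ((c : ℕ) < K))
        = (Finset.range K).attachFin
          (fun x hx => by rw [Finset.mem_range] at hx; omega) := by
      ext c
      simp [Finset.mem_attachFin]
    rw [h1, Finset.filter_not, Finset.card_sdiff_of_subset (Finset.filter_subset _ _), h2,
      Finset.card_attachFin, Finset.card_range]
    simp only [Finset.card_univ, Fintype.card_fin]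
    omega
  refine ⟨fun a => if a.1 = i0 then y a.2 else 0, ?_, ?_, ?_⟩
  · funext r
    rcases r with ⟨i, j⟩ | j
    · simp only [Matrix.mulVec, dotProduct, parityD, Pi.zero_apply]
      rw [Fintype.sum_prod_type]
      rw [Finset.sum_eq_single i0]
      · by_cases hii : i0 = i
        · subst hii
          simp only [if_pos rfl]
          have := hpar (j.val + 1) (by omega) (by have := j.isLt; omega)
          rw [← this]
          apply Finset.sum_congr rfl
          intro c _
          rfl
        · apply Finset.sum_eq_zero
          intro c _
          simp [if_neg hii]
      · intro i' _ hi'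
        apply Finset.sum_eq_zero
        intro c _
        simp [if_neg hi']
      · intro h
        exact absurd (Finset.mem_univ i0) h
    · simp only [Matrix.mulVec, dotProduct, parityD, Pi.zero_apply]
      rw [Fintype.sum_prod_type]
      rw [Finset.sum_eq_single i0]
      · simp only [if_pos rfl]
        have := hpar (u + j.val + 1) (by omega) (by have := j.isLt; omega)
        rw [← this]
        apply Finset.sum_congr rfl
        intro c _
        rfl
      · intro i' _ hi'
        apply Finset.sum_eq_zero
        intro c _
        simp [if_neg hi']
      · intro h
        exact absurd (Finset.mem_univ i0) h
  · intro hx0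
    have hpos : 0 < (univ.filter fun c : Fin m => y c ≠ 0).card := by
      rw [hycard]; omega
    obtain ⟨c, hc⟩ := Finset.card_pos.mp hpos
    rw [Finset.mem_filter] at hc
    have := congrFun hx0 (i0, c)
    simp only [if_pos rfl, Pi.zero_apply] at this
    exact hc.2 this
  · rw [card_filter_prod]
    rw [Finset.sum_eq_single i0]
    · simp only [if_pos rfl]
      exact hycard
    · intro i' _ hi'
      simp [if_neg hi']
    · intro h
      exact absurd (Finset.mem_univ i0) h

end D4

/-- D(u,v,t,m) is an (m-u, u+1)-LRC with parameters
[tm, tm - tu - v, u+v+1]_q attaining the Singleton-type bound. -/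
theorem stmt_11 (p e q m u v t : ℕ) (hp : p.Prime) (he : 0 < e) (hq : q = p ^ e)
    (hq5 : 5 ≤ q) (hm : m ∣ q - 1) (hu : 1 ≤ u) (ht : 1 ≤ t) (hvu : v ≤ u)
    (huv : u + v ≤ m - 1)
    {F : Type*} [Field F] [Fintype F] [DecidableEq F]
    (hF : Fintype.card F = q)
    (ζ : Fin t → F) (hζ : ∀ i, orderOf (ζ i) = m) :
    IsLRC ((LinearMap.ker (parityD m u v t ζ).mulVecLin : Submodule F _)
        : Set (Fin t × Fin m → F)) (m - u) (u + 1) ∧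
    Module.finrank F (LinearMap.ker (parityD m u v t ζ).mulVecLin)
        = t * m - t * u - v ∧
    minWt ((LinearMap.ker (parityD m u v t ζ).mulVecLin : Submodule F _)
        : Set (Fin t × Fin m → F)) = u + v + 1 ∧
    ((u + v + 1 : ℤ) =
      (t * m : ℤ) - (t * m - t * u - v : ℕ) + 1 -
        (⌈((t * m - t * u - v : ℕ) : ℚ) / ((m - u : ℕ) : ℚ)⌉ - 1) * ((u + 1 : ℤ) - 1)) := by

  classical
  have hm0 : 0 < m := by omega
  have huv1 : u + v + 1 ≤ m := by omega
  have hmem : ∀ x : Fin t × Fin m → F,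
      x ∈ ((LinearMap.ker (parityD m u v t ζ).mulVecLin : Submodule F _)
        : Set (Fin t × Fin m → F)) ↔ (parityD m u v t ζ).mulVec x = 0 := by
    intro x
    rw [SetLike.mem_coe, LinearMap.mem_ker, Matrix.mulVecLin_apply]
  refine ⟨?_, ?_, ?_, ?_⟩
  · -- IsLRC
    intro i
    refine ⟨univ.filter fun a : Fin t × Fin m => a.1 = i.1, by simp, ?_, ?_⟩
    · have hcard : (univ.filter fun a : Fin t × Fin m => a.1 = i.1).card = m := by
        rw [card_filter_prod]
        rw [Finset.sum_eq_single i.1]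
        · simp
        · intro b _ hb
          simp [Finset.filter_eq_empty_iff, hb]
        · intro h
          exact absurd (Finset.mem_univ i.1) h
      rw [hcard]
      omega
    · intro x hx hne
      rw [hmem] at hx
      have hne' : ∃ c2, x (i.1, c2) ≠ 0 := by
        obtain ⟨a, haS, hax⟩ := hne
        rw [Finset.mem_filter] at haS
        refine ⟨a.2, ?_⟩
        rw [← haS.2]
        exact hax
      have hblk := block_weight hm0 (by omega) hζ hx i.1 hne'
      rw [Finset.filter_filter, card_filter_prod]
      rw [Finset.sum_eq_single i.1]
      · convert hblk using 2
        ext c2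
        simp
      · intro b _ hb
        simp [Finset.filter_eq_empty_iff, hb]
      · intro h
        exact absurd (Finset.mem_univ i.1) h
  · -- finrank
    have hrank : (parityD m u v t ζ).rank = t * u + v := by
      rw [LinearIndependent.rank_matrix (M := parityD m u v t ζ) (rows_indep hm0 huv1 ht hζ)]
      simp
    have hrn := LinearMap.finrank_range_add_finrank_ker (parityD m u v t ζ).mulVecLin
    rw [Module.finrank_fintype_fun_eq_card] at hrn
    have hr2 : Module.finrank F (LinearMap.range (parityD m u v t ζ).mulVecLin)
        = t * u + v := hrank
    rw [hr2] at hrn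
    simp only [Fintype.card_prod, Fintype.card_fin] at hrn
    omega
  · -- minWt
    obtain ⟨x0, hx0k, hx00, hx0c⟩ := exists_min_codeword hm0 huv1 ht hu hζ
    have hmem0 : x0 ∈ ((LinearMap.ker (parityD m u v t ζ).mulVecLin : Submodule F _)
        : Set (Fin t × Fin m → F)) := (hmem x0).mpr hx0k
    have hin : u + v + 1 ∈ {w | ∃ x ∈ ((LinearMap.ker (parityD m u v t ζ).mulVecLin :
        Submodule F _) : Set (Fin t × Fin m → F)), x ≠ 0 ∧
        (Finset.univ.filter fun a => x a ≠ 0).card = w} := ⟨x0, hmem0, hx00, hx0c⟩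
    apply le_antisymm
    · exact Nat.sInf_le hin
    · apply le_csInf ⟨_, hin⟩
      rintro w ⟨x, hxk, hx0, rfl⟩
      rw [hmem] at hxk
      exact dist_lb hm0 huv1 hvu hu hζ hxk hx0
  · -- Singleton bound arithmetic
    have hum : u ≤ m := by omega
    have hA : t * (m - u) + t * u = t * m := by
      rw [← Nat.mul_add, Nat.sub_add_cancel hum]
    have hB : (t - 1) * (m - u) + (m - u) = t * (m - u) := by
      have h : t - 1 + 1 = t := by omega
      rw [← Nat.succ_mul, Nat.succ_eq_add_one, h]
    have hvlt : v < m - u := by omega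
    have hKle : t * m - t * u - v ≤ t * (m - u) := by omega
    have hKgt : (t - 1) * (m - u) < t * m - t * u - v := by omega
    have r0 : (0 : ℚ) < ((m - u : ℕ) : ℚ) := by exact_mod_cast hvlt.trans_le' (Nat.zero_le v)
    have hceil : ⌈((t * m - t * u - v : ℕ) : ℚ) / ((m - u : ℕ) : ℚ)⌉ = (t : ℤ) := by
      rw [Int.ceil_eq_iff]
      constructor
      · rw [lt_div_iff₀ r0]
        have hc : (((t - 1) * (m - u) : ℕ) : ℚ) < ((t * m - t * u - v : ℕ) : ℚ) :=
          Nat.cast_lt.mpr hKgt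
        rw [Nat.cast_mul, Nat.cast_sub ht] at hc
        push_cast
        push_cast at hc
        linarith
      · rw [div_le_iff₀ r0]
        have hc : ((t * m - t * u - v : ℕ) : ℚ) ≤ ((t * (m - u) : ℕ) : ℚ) :=
          Nat.cast_le.mpr hKle
        rw [Nat.cast_mul] at hc
        push_cast
        push_cast at hc
        linarith
    rw [hceil]
    have h1 : t * u ≤ t * m := by omega
    have h2 : v ≤ t * m - t * u := by omega
    have hcast : ((t * m - t * u - v : ℕ) : ℤ) = (t : ℤ) * m - (t : ℤ) * u - v := by
      rw [Nat.cast_sub h2, Nat.cast_sub h1, Nat.cast_mul, Nat.cast_mul]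
    rw [hcast]
    push_cast
    ring
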